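/- Let A and B be unital complex algebras with unities 1_A and 1_B, and let φ : A → B be a linear map satisfying φ(a²) = φ(a)² for all a ∈ A, such that 1_B lies in the image of φ. Then φ(1_A) = 1_B, and for every invertible a ∈ A the element φ(a) is invertible in B with φ(a)⁻¹ = φ(a⁻¹). -/
import Mathlib

open Matrix

noncomputable section

theorem jordan_hom_unital_preserves_inverses {A B : Type*}
    [Ring A] [Algebra ℂ A] [Ring B] [Algebra ℂ B]
    (φ : A →ₗ[ℂ] B)
    (hjordan : ∀ a : A, φ (a * a) = φ a * φ a)
    (hone : (1 : B) ∈ Set.range φ) :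
    φ 1 = 1 ∧ ∀ a : Aˣ, φ (↑a) * φ (↑a⁻¹) = 1 ∧ φ (↑a⁻¹) * φ (↑a) = 1 := by
  -- cancellation of 2 in B
  have half : ∀ x y : B, x + x = y + y → x = y := by
    intro x y h
    have h2 : (2:ℂ) • x = (2:ℂ) • y := by rw [two_smul, two_smul]; exact h
    have := congrArg (fun z : B => ((2:ℂ)⁻¹) • z) h2
    simpa [smul_smul] using this
  -- polarization
  have pol : ∀ a b : A, φ (a*b + b*a) = φ a * φ b + φ b * φ a := by
    intro a b
    have e1 : (a+b)*(a+b) = a*a + (a*b+b*a) + b*b := by noncomm_ring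
    have key := hjordan (a+b)
    rw [e1] at key
    simp only [map_add, hjordan] at key
    have h2 : φ a * φ a + (φ (a*b) + φ (b*a)) + φ b * φ b
        = φ a * φ a + (φ a * φ b + φ b * φ a) + φ b * φ b := by
      rw [key]; noncomm_ring
    rw [map_add]
    exact add_left_cancel (add_right_cancel h2)
  -- Jordan triple identity
  have triple : ∀ a b : A, φ (a*b*a) = φ a * φ b * φ a := by
    intro a b
    have h1 := pol a (a*b + b*a)
    have e1 : a*(a*b+b*a) + (a*b+b*a)*a = ((a*a)*b + b*(a*a)) + (a*b*a + a*b*a) := by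
      noncomm_ring
    rw [e1, map_add, pol (a*a) b, hjordan a, pol a b] at h1
    have hs := eq_sub_of_add_eq' h1
    rw [map_add] at hs
    apply half
    rw [hs]
    noncomm_ring
  -- φ 1 = 1
  obtain ⟨u, hu⟩ := hone
  have hone' : φ 1 = 1 := by
    have h := pol u 1
    rw [mul_one, one_mul, map_add, hu, one_mul, mul_one] at h
    exact (half _ _ h).symm
  refine ⟨hone', fun a => ?_⟩
  set x := φ (a : A) with hx
  set y := φ ((a⁻¹ : Aˣ) : A) with hy
  have hxyyx : x * y + y * x = 1 + 1 := by
    have h := pol (a : A) ((a⁻¹ : Aˣ) : A)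
    rw [Units.mul_inv, Units.inv_mul, map_add, hone'] at h
    exact h.symm
  have hxyx : x * y * x = x := by
    have h := triple (a : A) ((a⁻¹ : Aˣ) : A)
    have e : (a : A) * ((a⁻¹ : Aˣ) : A) * (a : A) = (a : A) := by
      rw [Units.mul_inv, one_mul]
    rw [e] at h
    exact h.symm
  have hyxy : y * x * y = y := by
    have h := triple ((a⁻¹ : Aˣ) : A) (a : A)
    have e : ((a⁻¹ : Aˣ) : A) * (a : A) * ((a⁻¹ : Aˣ) : A) = ((a⁻¹ : Aˣ) : A) := by
      rw [Units.inv_mul, one_mul]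
    rw [e] at h
    exact h.symm
  have hp : (x*y) * (x*y) = x*y := by
    calc (x*y)*(x*y) = (x*y*x)*y := by noncomm_ring
    _ = x*y := by rw [hxyx]
  have hq : (y*x) * (y*x) = y*x := by
    calc (y*x)*(y*x) = (y*x*y)*x := by noncomm_ring
    _ = y*x := by rw [hyxy]
  have hq' : y*x = (1+1) - x*y := eq_sub_of_add_eq' hxyyx
  have hp' : x*y = (1+1) - y*x := eq_sub_of_add_eq hxyyx
  have hpq1 : (x*y) * (y*x) = x*y := by
    rw [hq', mul_sub, mul_add, mul_one]
    rw [show x*y*(x*y) = (x*y)*(x*y) from rfl, hp]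
    abel
  have hpq2 : (x*y) * (y*x) = y*x := by
    rw [hp', sub_mul, add_mul, one_mul, hq]
    abel
  have hpeq : x*y = y*x := hpq1.symm.trans hpq2
  have hxy1 : x*y = 1 := by
    apply half
    rw [← hxyyx]
    nth_rewrite 2 [hpeq]
    rfl
  have hyx1 : y*x = 1 := by rw [← hpeq]; exact hxy1
  exact ⟨hxy1, hyx1⟩
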